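/- Define the radialization operator P on functions f : F_k → ℂ by P(f)(x) = (1/e_n)·∑_{w ∈ E_n} f(w) where n = |x|. Then for all n ≥ 1 and all f, P(f ∗ χ_n) = P(f) ∗ χ_n. -/

import Mathlib

/-- The sphere of radius `n` about the identity in the free group `F_k`:
the finite set of elements of reduced word length `n`. -/
noncomputable def sphere (k n : ℕ) : Finset (FreeGroup (Fin k)) :=
  (Set.Finite.preimage (Function.Injective.injOn FreeGroup.toWord_injective)
    (List.finite_length_eq ((Fin k) × Bool) n)).toFinset

/-- `χ_n = ∑_{|x| = n} x`, the sum of the sphere of radius `n` in `ℂ[F_k]`. -/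
noncomputable def chi (k n : ℕ) : MonoidAlgebra ℂ (FreeGroup (Fin k)) :=
  ∑ x ∈ sphere k n, MonoidAlgebra.of ℂ (FreeGroup (Fin k)) x

/-- The polynomials `p_0 = 1`, `p_1 = z`, `p_2 = z² - 2k`,
`p_{n+1} = z p_n - (2k-1) p_{n-1}` for `n ≥ 2`. -/
noncomputable def p (k : ℕ) : ℕ → Polynomial ℂ
  | 0 => 1
  | 1 => Polynomial.X
  | 2 => Polynomial.X ^ 2 - Polynomial.C ((2 * k : ℕ) : ℂ)
  | (n + 3) => Polynomial.X * p k (n + 2) - Polynomial.C ((2 * k - 1 : ℕ) : ℂ) * p k (n + 1)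

/-- `e_0 = 1` and `e_n = 2k(2k-1)^{n-1}` for `n ≥ 1`, the cardinality of the sphere. -/
def eN (k n : ℕ) : ℕ := if n = 0 then 1 else 2 * k * (2 * k - 1) ^ (n - 1)

/-- The radialization operator `P(f)(x) = (1/e_{|x|})·∑_{w ∈ E_{|x|}} f(w)`. -/
noncomputable def Prad (k : ℕ) (f : FreeGroup (Fin k) → ℂ) : FreeGroup (Fin k) → ℂ :=
  fun x => ((eN k x.toWord.length : ℂ))⁻¹ * ∑ w ∈ sphere k x.toWord.length, f w


section Aux

variable {α : Type*} [DecidableEq α]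

lemma red_tail {x : α × Bool} {L : List (α × Bool)} (h : FreeGroup.reduce (x :: L) = x :: L) :
    FreeGroup.reduce L = L := by
  rcases hL : FreeGroup.reduce L with _ | ⟨hd, tl⟩
  · rw [FreeGroup.reduce.cons, hL] at h
    dsimp only at h
    simp only [List.cons.injEq, true_and] at h
    rw [← h]
  · rw [FreeGroup.reduce.cons, hL] at h
    dsimp only at h
    split_ifs at h with hc
    · exfalso
      have hlen : (FreeGroup.reduce L).length ≤ L.length :=
        FreeGroup.Red.length_le FreeGroup.reduce.red
      rw [hL] at hlen
      simp [h] at hlen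
    · simp only [List.cons.injEq, true_and] at h
      exact h

lemma red_head {x y : α × Bool} {L : List (α × Bool)}
    (h : FreeGroup.reduce (x :: y :: L) = x :: y :: L) :
    ¬(x.1 = y.1 ∧ x.2 = !y.2) := by
  have h2 : FreeGroup.reduce (y :: L) = y :: L := red_tail h
  rw [FreeGroup.reduce.cons, h2] at h
  dsimp only at h
  split_ifs at h with hc
  · exfalso
    have := congrArg List.length h
    simp at this; omega
  · exact hc

lemma reduce_append_singleton : ∀ {L : List (α × Bool)}, FreeGroup.reduce L = L → ∀ p : α × Bool,
    FreeGroup.reduce (L ++ [p]) =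
      if L.getLast? = some (p.1, !p.2) then L.dropLast else L ++ [p] := by
  intro L
  induction L with
  | nil => intro _ p; simp [FreeGroup.reduce_singleton]
  | cons x L ih =>
    intro h p
    have hL : FreeGroup.reduce L = L := red_tail h
    have ihL := ih hL p
    by_cases hc : L.getLast? = some (p.1, !p.2)
    · rw [if_pos hc] at ihL
      have hLne : L ≠ [] := by rintro rfl; simp at hc
      obtain ⟨y, L'', rfl⟩ := List.exists_cons_of_ne_nil hLne
      rw [List.cons_append, FreeGroup.reduce.cons, ihL,
        if_pos ((List.getLast?_cons_cons).trans hc),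
        List.dropLast_cons_of_ne_nil (by simp : (y :: L'') ≠ [])]
      rcases hdl : (y :: L'').dropLast with _ | ⟨hd, tl⟩
      · rfl
      · dsimp only
        have hdy : hd = y := by
          rcases L'' with _ | ⟨z, L'''⟩
          · simp at hdl
          · rw [List.dropLast_cons_of_ne_nil (by simp)] at hdl
            exact (List.cons.injEq _ _ _ _ ▸ hdl).1.symm
        subst hdy
        rw [if_neg (red_head h)]
    · rw [if_neg hc] at ihL
      rcases L with _ | ⟨y, L''⟩
      · simp only [List.nil_append, List.getLast?_nil] at *
        rw [List.cons_append, List.nil_append, FreeGroup.reduce.cons, FreeGroup.reduce_singleton]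
        dsimp only
        simp only [List.getLast?_singleton, Option.some.injEq]
        by_cases hxp : x = (p.1, !p.2)
        · rw [if_pos ⟨by rw [hxp], by rw [hxp]⟩, if_pos hxp]
          rfl
        · rw [if_neg (fun hh => hxp (Prod.ext hh.1 hh.2)), if_neg hxp]
      · rw [List.cons_append, FreeGroup.reduce.cons, ihL, List.cons_append]
        dsimp only
        rw [if_neg (red_head h)]
        have : (x :: y :: L'').getLast? ≠ some (p.1, !p.2) := by
          rwa [List.getLast?_cons_cons]
        rw [if_neg this]

lemma reduce_dropLast : ∀ {L : List (α × Bool)}, FreeGroup.reduce L = L →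
    FreeGroup.reduce L.dropLast = L.dropLast := by
  intro L
  induction L with
  | nil => intro _; rfl
  | cons x L ih =>
    intro h
    have hL : FreeGroup.reduce L = L := red_tail h
    rcases L with _ | ⟨y, L''⟩
    · rfl
    · rw [List.dropLast_cons_of_ne_nil (by simp), FreeGroup.reduce.cons, ih hL]
      rcases hdl : (y :: L'').dropLast with _ | ⟨hd, tl⟩
      · rfl
      · dsimp only
        have hdy : hd = y := by
          rcases L'' with _ | ⟨z, L'''⟩
          · simp at hdl
          · rw [List.dropLast_cons_of_ne_nil (by simp)] at hdl
            exact (List.cons.injEq _ _ _ _ ▸ hdl).1.symm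
        subst hdy
        rw [if_neg (red_head h)]

lemma mem_sphere {k n : ℕ} {x : FreeGroup (Fin k)} :
    x ∈ sphere k n ↔ x.toWord.length = n := by
  simp [sphere, Set.Finite.mem_toFinset]

lemma toWord_mk_singleton {k : ℕ} (p : Fin k × Bool) :
    (FreeGroup.mk [p]).toWord = [p] := by
  rw [FreeGroup.toWord_mk, FreeGroup.reduce_singleton]

lemma mk_singleton_injective {k : ℕ} :
    Function.Injective (fun p : Fin k × Bool => FreeGroup.mk [p]) := by
  intro p q h
  have := congrArg FreeGroup.toWord h
  rw [toWord_mk_singleton, toWord_mk_singleton] at this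
  simpa using this

lemma sphere_one_eq (k : ℕ) :
    sphere k 1 = Finset.image (fun p : Fin k × Bool => FreeGroup.mk [p]) Finset.univ := by
  ext u
  simp only [mem_sphere, Finset.mem_image, Finset.mem_univ, true_and]
  constructor
  · intro hu
    obtain ⟨a, ha⟩ := List.length_eq_one_iff.mp hu
    exact ⟨a, FreeGroup.toWord_injective (by rw [toWord_mk_singleton, ha])⟩
  · rintro ⟨p, rfl⟩
    rw [toWord_mk_singleton]; rfl

lemma sphere_zero (k : ℕ) : sphere k 0 = {1} := by
  ext u
  simp [mem_sphere, List.length_eq_zero_iff, FreeGroup.toWord_eq_nil_iff]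



lemma toWord_mul_mk {k : ℕ} (x : FreeGroup (Fin k)) (p : Fin k × Bool) :
    (x * FreeGroup.mk [p]).toWord =
      if x.toWord.getLast? = some (p.1, !p.2) then x.toWord.dropLast else x.toWord ++ [p] := by
  conv_lhs => rw [← FreeGroup.mk_toWord (x := x)]
  rw [FreeGroup.mul_mk, FreeGroup.toWord_mk,
    reduce_append_singleton (FreeGroup.reduce_toWord x) p]

lemma toWord_mk_dropLast {k : ℕ} (x : FreeGroup (Fin k)) :
    (FreeGroup.mk x.toWord.dropLast).toWord = x.toWord.dropLast := by
  rw [FreeGroup.toWord_mk, reduce_dropLast (FreeGroup.reduce_toWord x)]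

/-- In a reduced word, the last letter of the dropLast is not the inverse of the last letter. -/
lemma no_cancel_getLast {k : ℕ} {u : FreeGroup (Fin k)} (hne : u.toWord ≠ [])
    {p : Fin k × Bool} (hp : u.toWord.getLast? = some p) :
    ¬ u.toWord.dropLast.getLast? = some (p.1, !p.2) := by
  intro hcon
  have hred : FreeGroup.reduce u.toWord.dropLast = u.toWord.dropLast :=
    reduce_dropLast (FreeGroup.reduce_toWord u)
  have h1 := reduce_append_singleton hred p
  rw [if_pos hcon] at h1
  have h2 : u.toWord.dropLast ++ [p] = u.toWord :=
    List.dropLast_append_getLast? p hp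
  have h3 : FreeGroup.reduce u.toWord = u.toWord := FreeGroup.reduce_toWord u
  conv_lhs at h3 => rw [← h2]
  rw [h1] at h3
  have h4 := congrArg List.length h3
  have h5 : 1 ≤ u.toWord.length := List.length_pos_iff.mpr hne
  simp only [List.length_dropLast] at h4
  omega

lemma partA {k : ℕ} (hk : 0 < k) (m : ℕ) (g : FreeGroup (Fin k) → ℂ) :
    ∑ q ∈ (sphere k m ×ˢ (Finset.univ : Finset (Fin k × Bool))).filter
        (fun q => ¬ q.1.toWord.getLast? = some (q.2.1, !q.2.2)),
      g (q.1 * FreeGroup.mk [q.2]) = ∑ u ∈ sphere k (m+1), g u := by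
  apply Finset.sum_nbij' (i := fun q : FreeGroup (Fin k) × (Fin k × Bool) => q.1 * FreeGroup.mk [q.2])
    (j := fun u => (FreeGroup.mk u.toWord.dropLast,
      (u.toWord.getLast?).getD ((⟨0, hk⟩ : Fin k), true)))
  · -- i maps into sphere (m+1)
    rintro ⟨w, p⟩ hq
    rw [Finset.mem_filter, Finset.mem_product] at hq
    obtain ⟨⟨hw, -⟩, hnc⟩ := hq
    rw [mem_sphere, toWord_mul_mk, if_neg hnc, List.length_append, mem_sphere.mp hw]
    rfl
  · -- j maps back
    intro u hu
    rw [mem_sphere] at hu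
    have hne : u.toWord ≠ [] := by
      intro hcon; rw [hcon] at hu; simp at hu
    have hgl : u.toWord.getLast? = some (u.toWord.getLast hne) :=
      List.getLast?_eq_getLast hne
    rw [Finset.mem_filter, Finset.mem_product]
    refine ⟨⟨?_, Finset.mem_univ _⟩, ?_⟩
    · rw [mem_sphere, toWord_mk_dropLast, List.length_dropLast, hu]
      omega
    · rw [toWord_mk_dropLast, hgl]
      exact no_cancel_getLast hne hgl
  · -- left inverse
    rintro ⟨w, p⟩ hq
    rw [Finset.mem_filter, Finset.mem_product] at hq
    obtain ⟨⟨hw, -⟩, hnc⟩ := hq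
    have htw : (w * FreeGroup.mk [p]).toWord = w.toWord ++ [p] := by
      rw [toWord_mul_mk, if_neg hnc]
    dsimp only
    rw [htw, List.dropLast_concat, List.getLast?_concat, FreeGroup.mk_toWord]
    rfl
  · -- right inverse
    intro u hu
    rw [mem_sphere] at hu
    have hne : u.toWord ≠ [] := by
      intro hcon; rw [hcon] at hu; simp at hu
    have hgl : u.toWord.getLast? = some (u.toWord.getLast hne) :=
      List.getLast?_eq_getLast hne
    dsimp only
    rw [hgl]
    dsimp only [Option.getD_some]
    conv_rhs => rw [← FreeGroup.mk_toWord (x := u)]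
    rw [FreeGroup.mul_mk]
    congr 1
    exact List.dropLast_append_getLast hne
  · intro q hq
    rfl

lemma partA' {k : ℕ} (hk : 0 < k) (m : ℕ) (g : FreeGroup (Fin k) → ℂ) :
    ∑ w ∈ sphere k m, ∑ p ∈ Finset.univ.filter
        (fun p : Fin k × Bool => ¬ w.toWord.getLast? = some (p.1, !p.2)),
      g (w * FreeGroup.mk [p]) = ∑ u ∈ sphere k (m+1), g u := by
  rw [← partA hk m g]
  simp only [Finset.sum_filter]
  rw [← Finset.sum_product']

def cN (k m : ℕ) : ℕ := if m = 1 then 2 * k else 2 * k - 1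

lemma filter_cancel_singleton {k : ℕ} {v : FreeGroup (Fin k)} (hne : v.toWord ≠ []) :
    Finset.univ.filter (fun p : Fin k × Bool => v.toWord.getLast? = some (p.1, !p.2))
      = {((v.toWord.getLast hne).1, !(v.toWord.getLast hne).2)} := by
  have hgl : v.toWord.getLast? = some (v.toWord.getLast hne) :=
    List.getLast?_eq_getLast hne
  set l := v.toWord.getLast hne with hl
  ext p
  simp only [Finset.mem_filter, Finset.mem_univ, true_and, Finset.mem_singleton, hgl,
    Option.some.injEq, Prod.ext_iff]
  constructor
  · rintro ⟨h1, h2⟩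
    exact ⟨h1.symm, by rw [h2]; simp⟩
  · rintro ⟨h1, h2⟩
    exact ⟨h1.symm, by rw [h2]; simp⟩

lemma cardNC {k : ℕ} (v : FreeGroup (Fin k)) :
    (Finset.univ.filter
        (fun p : Fin k × Bool => ¬ v.toWord.getLast? = some (p.1, !p.2))).card
      = 2 * k - (if v.toWord = [] then 0 else 1) := by
  have hcard : (Finset.univ : Finset (Fin k × Bool)).card = 2 * k := by
    simp [Finset.card_univ, mul_comm]
  rw [Finset.filter_not, Finset.card_sdiff_of_subset (Finset.filter_subset _ _), hcard]
  congr 1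
  by_cases hv : v.toWord = []
  · rw [if_pos hv]
    rw [Finset.card_eq_zero, Finset.filter_eq_empty_iff]
    intro p _
    simp [hv]
  · rw [if_neg hv, filter_cancel_singleton hv, Finset.card_singleton]

lemma mul_cancel_letter {k : ℕ} {w : FreeGroup (Fin k)} (hne : w.toWord ≠ []) :
    w * FreeGroup.mk [((w.toWord.getLast hne).1, !(w.toWord.getLast hne).2)]
      = FreeGroup.mk w.toWord.dropLast := by
  apply FreeGroup.toWord_injective
  rw [toWord_mul_mk, toWord_mk_dropLast, if_pos]
  rw [List.getLast?_eq_getLast hne]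
  simp

lemma partB {k : ℕ} (hk : 0 < k) (m : ℕ) (g : FreeGroup (Fin k) → ℂ) :
    ∑ w ∈ sphere k (m+1), g (FreeGroup.mk w.toWord.dropLast)
      = (cN k (m+1) : ℂ) * ∑ v ∈ sphere k m, g v := by
  rw [← partA' hk m (fun u => g (FreeGroup.mk u.toWord.dropLast)), Finset.mul_sum]
  apply Finset.sum_congr rfl
  intro v hv
  have step : ∀ p ∈ Finset.univ.filter
      (fun p : Fin k × Bool => ¬ v.toWord.getLast? = some (p.1, !p.2)),
      g (FreeGroup.mk (v * FreeGroup.mk [p]).toWord.dropLast) = g v := by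
    intro p hp
    rw [Finset.mem_filter] at hp
    rw [toWord_mul_mk, if_neg hp.2, List.dropLast_concat, FreeGroup.mk_toWord]
  rw [Finset.sum_congr rfl step, Finset.sum_const, cardNC, nsmul_eq_mul]
  congr 2
  rcases m with _ | m'
  · have hv1 : v.toWord = [] := by
      rw [sphere_zero] at hv
      simp only [Finset.mem_singleton] at hv
      rw [hv, FreeGroup.toWord_one]
    rw [if_pos hv1, cN]
    simp
  · have hv1 : ¬ v.toWord = [] := by
      rw [mem_sphere] at hv
      intro hcon
      rw [hcon] at hv
      simp at hv
    rw [if_neg hv1, cN]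
    simp

lemma conv_one {k : ℕ} (hk : 0 < k) (m : ℕ) (hm : 1 ≤ m) (h : FreeGroup (Fin k) → ℂ) :
    ∑ w ∈ sphere k m, ∑ z ∈ sphere k 1, h (w * z)
      = ∑ u ∈ sphere k (m+1), h u + (cN k m : ℂ) * ∑ u ∈ sphere k (m-1), h u := by
  obtain ⟨m', rfl⟩ : ∃ m', m = m' + 1 := ⟨m - 1, by omega⟩
  have hsplit : ∀ w ∈ sphere k (m' + 1),
      ∑ z ∈ sphere k 1, h (w * z)
        = h (FreeGroup.mk w.toWord.dropLast)
          + ∑ p ∈ Finset.univ.filter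
              (fun p : Fin k × Bool => ¬ w.toWord.getLast? = some (p.1, !p.2)),
            h (w * FreeGroup.mk [p]) := by
    intro w hw
    have hne : w.toWord ≠ [] := by
      rw [mem_sphere] at hw
      intro hcon
      rw [hcon] at hw
      simp at hw
    rw [sphere_one_eq, Finset.sum_image (fun a _ b _ hab => mk_singleton_injective hab),
      ← Finset.sum_filter_add_sum_filter_not Finset.univ
        (fun p : Fin k × Bool => w.toWord.getLast? = some (p.1, !p.2))]
    congr 1
    rw [filter_cancel_singleton hne, Finset.sum_singleton, mul_cancel_letter hne]
  rw [Finset.sum_congr rfl hsplit, Finset.sum_add_distrib, partA' hk (m' + 1) h,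
    partB hk m' h]
  simp only [Nat.add_sub_cancel]
  ring

lemma eN_pos {k : ℕ} (hk : 0 < k) (n : ℕ) : 0 < eN k n := by
  unfold eN
  split
  · omega
  · have h1 : 0 < 2 * k - 1 := by omega
    exact Nat.mul_pos (by omega) (Nat.pow_pos h1)

lemma cN_pos {k : ℕ} (hk : 0 < k) (m : ℕ) : 0 < cN k m := by
  unfold cN; split <;> omega

lemma eN_mul_c {k : ℕ} (hk : 0 < k) {m : ℕ} (hm : 1 ≤ m) :
    eN k m = cN k m * eN k (m - 1) := by
  rcases m with _ | m'
  · omega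
  · rcases m' with _ | m''
    · simp [eN, cN]
    · unfold eN cN
      simp only [Nat.add_sub_cancel]
      rw [if_neg (by omega), if_neg (by omega), if_neg (by omega)]
      rw [pow_succ]
      ring

lemma eN_succ {k : ℕ} (hk : 0 < k) {m : ℕ} (hm : 1 ≤ m) :
    eN k (m + 1) = (2 * k - 1) * eN k m := by
  have h := eN_mul_c hk (m := m + 1) (by omega)
  rw [h, Nat.add_sub_cancel]
  congr 1
  unfold cN
  rw [if_neg (by omega)]

lemma Prad_apply {k n : ℕ} (f : FreeGroup (Fin k) → ℂ) {y : FreeGroup (Fin k)}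
    (h : y.toWord.length = n) :
    Prad k f y = ((eN k n : ℂ))⁻¹ * ∑ w ∈ sphere k n, f w := by
  unfold Prad
  rw [h]

lemma Q1 {k : ℕ} (hk : 0 < k) (f : FreeGroup (Fin k) → ℂ) :
    Prad k (fun x => ∑ z ∈ sphere k 1, f (x * z))
      = fun x => ∑ z ∈ sphere k 1, Prad k f (x * z) := by
  have hcard : (sphere k 1).card = 2 * k := by
    rw [sphere_one_eq, Finset.card_image_of_injective _ mk_singleton_injective]
    simp [mul_comm]
  funext x
  rcases Nat.eq_zero_or_pos x.toWord.length with h0 | h1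
  · -- x = 1
    have hx : x = 1 := by
      rw [← FreeGroup.toWord_eq_nil_iff, ← List.length_eq_zero_iff, h0]
    subst hx
    have hlen : ∀ z ∈ sphere k 1, Prad k f (1 * z)
        = ((eN k 1 : ℂ))⁻¹ * ∑ w ∈ sphere k 1, f w := by
      intro z hz
      rw [one_mul, Prad_apply _ (mem_sphere.mp hz)]
    rw [Prad_apply (n := 0) _ (by rw [FreeGroup.toWord_one]; rfl), sphere_zero,
      Finset.sum_singleton, Finset.sum_congr rfl hlen, Finset.sum_const, nsmul_eq_mul, hcard]
    simp only [one_mul]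
    have heN0 : eN k 0 = 1 := by simp [eN]
    have heN1 : eN k 1 = 2 * k := by simp [eN]
    rw [heN0, heN1]
    have h2k : ((2 * k : ℕ) : ℂ) ≠ 0 := Nat.cast_ne_zero.mpr (by omega)
    rw [Nat.cast_one, inv_one, one_mul, mul_inv_cancel_left₀ h2k]
  · -- |x| = m ≥ 1
    set m := x.toWord.length with hm
    have hne : x.toWord ≠ [] := by
      intro hcon
      rw [← List.length_eq_zero_iff] at hcon
      omega
    rw [Prad_apply _ rfl, conv_one hk m h1 f]
    have hsplit : ∑ z ∈ sphere k 1, Prad k f (x * z)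
        = Prad k f (FreeGroup.mk x.toWord.dropLast)
          + ∑ p ∈ Finset.univ.filter
              (fun p : Fin k × Bool => ¬ x.toWord.getLast? = some (p.1, !p.2)),
            Prad k f (x * FreeGroup.mk [p]) := by
      rw [sphere_one_eq, Finset.sum_image (fun a _ b _ hab => mk_singleton_injective hab),
        ← Finset.sum_filter_add_sum_filter_not Finset.univ
          (fun p : Fin k × Bool => x.toWord.getLast? = some (p.1, !p.2))]
      congr 1
      rw [filter_cancel_singleton hne, Finset.sum_singleton, mul_cancel_letter hne]
    rw [hsplit]
    have t1 : Prad k f (FreeGroup.mk x.toWord.dropLast)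
        = ((eN k (m - 1) : ℂ))⁻¹ * ∑ w ∈ sphere k (m - 1), f w := by
      apply Prad_apply
      rw [toWord_mk_dropLast, List.length_dropLast]
    have t2 : ∀ p ∈ Finset.univ.filter
        (fun p : Fin k × Bool => ¬ x.toWord.getLast? = some (p.1, !p.2)),
        Prad k f (x * FreeGroup.mk [p])
          = ((eN k (m + 1) : ℂ))⁻¹ * ∑ w ∈ sphere k (m + 1), f w := by
      intro p hp
      rw [Finset.mem_filter] at hp
      apply Prad_apply
      rw [toWord_mul_mk, if_neg hp.2, List.length_append]
      rfl
    rw [t1, Finset.sum_congr rfl t2, Finset.sum_const, nsmul_eq_mul, cardNC, if_neg hne]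
    -- arithmetic
    have hA : ((eN k (m - 1) : ℕ) : ℂ) ≠ 0 := Nat.cast_ne_zero.mpr (eN_pos hk _).ne'
    have hc : ((cN k m : ℕ) : ℂ) ≠ 0 := Nat.cast_ne_zero.mpr (cN_pos hk _).ne'
    have hd : ((2 * k - 1 : ℕ) : ℂ) ≠ 0 := Nat.cast_ne_zero.mpr (by omega)
    have hB : ((eN k m : ℕ) : ℂ) = (cN k m : ℂ) * (eN k (m - 1) : ℂ) := by
      rw [← Nat.cast_mul, Nat.cast_inj]
      exact eN_mul_c hk h1
    have hC : ((eN k (m + 1) : ℕ) : ℂ) = ((2 * k - 1 : ℕ) : ℂ) * (eN k m : ℂ) := by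
      rw [← Nat.cast_mul, Nat.cast_inj]
      exact eN_succ hk h1
    rw [hC, hB]
    set A := ((eN k (m - 1) : ℕ) : ℂ) with hAdef
    set c := ((cN k m : ℕ) : ℂ) with hcdef
    set d := ((2 * k - 1 : ℕ) : ℂ) with hddef
    field_simp
    ring

lemma Prad_sub {k : ℕ} (g h : FreeGroup (Fin k) → ℂ) (c : ℂ) :
    Prad k (fun x => g x - c * h x) = fun x => Prad k g x - c * Prad k h x := by
  funext x
  unfold Prad
  rw [Finset.sum_sub_distrib, ← Finset.mul_sum]
  ring


end Aux

/-- `P(f ∗ χ_n) = P(f) ∗ χ_n` for all `n ≥ 1` and all `f`,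
where `(f ∗ χ_n)(x) = ∑_{y ∈ E_n} f(xy)`. -/
theorem stmt19 (k : ℕ) (hk : 2 ≤ k) (n : ℕ) (hn : 1 ≤ n) (f : FreeGroup (Fin k) → ℂ) :
    Prad k (fun x => ∑ y ∈ sphere k n, f (x * y)) =
      fun x => ∑ y ∈ sphere k n, Prad k f (x * y) := by
  have hk' : 0 < k := by omega
  have main : ∀ n : ℕ,
      (∀ f : FreeGroup (Fin k) → ℂ, Prad k (fun x => ∑ y ∈ sphere k n, f (x * y))
        = fun x => ∑ y ∈ sphere k n, Prad k f (x * y))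
      ∧ (∀ f : FreeGroup (Fin k) → ℂ, Prad k (fun x => ∑ y ∈ sphere k (n+1), f (x * y))
        = fun x => ∑ y ∈ sphere k (n+1), Prad k f (x * y)) := by
    intro n
    induction n with
    | zero =>
      constructor
      · intro f
        simp only [sphere_zero, Finset.sum_singleton, mul_one]
      · intro f
        exact Q1 hk' f
    | succ n ih =>
      refine ⟨ih.2, ?_⟩
      intro f
      have key : ∀ g : FreeGroup (Fin k) → ℂ,
          (fun x => ∑ y ∈ sphere k (n+2), g (x * y))
            = fun x => (fun x' => ∑ y ∈ sphere k (n+1),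
                  (fun u => ∑ z ∈ sphere k 1, g (u * z)) (x' * y)) x
                - (cN k (n+1) : ℂ) * (fun x' => ∑ y ∈ sphere k n, g (x' * y)) x := by
        intro g
        funext x
        have hco := conv_one hk' (n+1) (by omega) (fun u => g (x * u))
        simp only [Nat.add_sub_cancel] at hco
        simp only
        simp only [← mul_assoc] at hco
        rw [hco]
        ring
      rw [key f, Prad_sub, ih.2 (fun u => ∑ z ∈ sphere k 1, f (u * z)), Q1 hk' f,
        ih.1 f]
      conv_rhs => rw [key (Prad k f)]
  exact (main n).1 f
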